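/- Let K ⊆ ℝ be a real quadratic number field and (A_n)_n a non-degenerate linear recurrence sequence with values in K such that the sequence (A_n^K)_n is non-zero. Then no root of the linear recurrence sequence (A_n^K)_n is a root of unity. -/
import Mathlib


open Polynomial Filter

/-- Characteristic polynomial `X^k - c_1 X^(k-1) - ⋯ - c_k` of a linear recurrence
`A_n = c_1 A_(n-1) + ⋯ + c_k A_(n-k)`, where `c i = c_(i+1)`. -/
noncomputable def charPoly {K : Type*} [Field K] (k : ℕ) (c : Fin k → K) : Polynomial K :=
  X ^ k - ∑ i : Fin k, C (c i) * X ^ (k - 1 - (i : ℕ))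

/-- The embedding of a subfield `K` of `ℝ` into `ℂ`. -/
noncomputable def embC (K : IntermediateField ℚ ℝ) : K →+* ℂ :=
  Complex.ofRealHom.comp (algebraMap K ℝ)

/-- `B` satisfies the linear recurrence with (monic) characteristic polynomial `Q`. -/
def SatisfiesRec {K : Type*} [Field K] (B : ℕ → K) (Q : Polynomial K) : Prop :=
  ∀ n : ℕ, ∑ i ∈ Finset.range (Q.natDegree + 1), Q.coeff i * B (n + i) = 0

/-- `Q` is the (minimal) characteristic polynomial of the sequence `B`. -/
def IsCharPolyOf {K : Type*} [Field K] (B : ℕ → K) (Q : Polynomial K) : Prop :=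
  Q.Monic ∧ SatisfiesRec B Q ∧ ∀ Q' : Polynomial K, Q'.Monic → SatisfiesRec B Q' → Q ∣ Q'

/-- for a non-degenerate linear recurrence `A` in a real quadratic field `K`,
write its characteristic polynomial as `PQ * PK`, where every monic irreducible factor `π` of
`PQ` satisfies `π = π'` and every monic irreducible factor `π` of `PK` satisfies `π ≠ π'`;
let `B = A^K` be the corresponding component of `A` (characterized by: `B` satisfies the
`PK`-recurrence and `A - B` satisfies the `PQ`-recurrence).  If `B` is non-zero, then no root
of the characteristic polynomial of `B` is a root of unity. -/
theorem stmt_10 (K : IntermediateField ℚ ℝ) (hK : Module.finrank ℚ K = 2)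
    (conj : K ≃ₐ[ℚ] K) (hconj : conj ≠ AlgEquiv.refl)
    (A : ℕ → K)
    (k : ℕ) (hk : 0 < k) (c : Fin k → K)
    (hck : c ⟨k - 1, by omega⟩ ≠ 0)
    (hrec : ∀ n : ℕ, k ≤ n → A n = ∑ i : Fin k, c i * A (n - 1 - (i : ℕ)))
    (hnd : ∀ α β : ℂ, ((charPoly k c).map (embC K)).IsRoot α →
      ((charPoly k c).map (embC K)).IsRoot β →
      (∃ m : ℕ, 0 < m ∧ (α / β) ^ m = 1) → α = β)
    (PQ PK : Polynomial K) (hPQmonic : PQ.Monic) (hPKmonic : PK.Monic)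
    (hfact : charPoly k c = PQ * PK)
    (hPQ : ∀ π : Polynomial K, π.Monic → Irreducible π → π ∣ PQ →
      π.map conj.toAlgHom.toRingHom = π)
    (hPK : ∀ π : Polynomial K, π.Monic → Irreducible π → π ∣ PK →
      π.map conj.toAlgHom.toRingHom ≠ π)
    (B : ℕ → K) (hBrec : SatisfiesRec B PK)
    (hABrec : SatisfiesRec (fun n : ℕ => A n - B n) PQ)
    (hBne : ∃ n : ℕ, B n ≠ 0) :
    ∀ QB : Polynomial K, IsCharPolyOf B QB →
      ∀ α : ℂ, (QB.map (embC K)).IsRoot α → ¬ (∃ m : ℕ, 0 < m ∧ α ^ m = 1) := by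

  rintro QB ⟨hQBm, hQBsat, hQBmin⟩ α hα ⟨m, hm, hαm⟩
  have hQBdvd : QB ∣ PK := hQBmin PK hPKmonic hBrec
  have hdvdC : QB ∣ charPoly k c := hQBdvd.trans ⟨PQ, by rw [hfact, mul_comm]⟩
  have hmapdvd : QB.map (embC K) ∣ (charPoly k c).map (embC K) :=
    Polynomial.map_dvd _ hdvdC
  have hαC : ((charPoly k c).map (embC K)).IsRoot α := by
    obtain ⟨q, hq⟩ := hmapdvd
    simp [Polynomial.IsRoot, hq, Polynomial.eval_mul, hα.eq_zero]
  have hcomp : (starRingEnd ℂ).comp (embC K) = embC K := by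
    ext x; simp [embC]
  have hconjroot : ((charPoly k c).map (embC K)).IsRoot (starRingEnd ℂ α) := by
    have h2 : ((charPoly k c).map (embC K)).eval (starRingEnd ℂ α)
        = starRingEnd ℂ (((charPoly k c).map (embC K)).eval α) := by
      conv_lhs => rw [← hcomp]
      rw [← Polynomial.map_map, Polynomial.eval_map, Polynomial.eval₂_hom]
    simp [Polynomial.IsRoot, h2, hαC.eq_zero]
  have hratio : (α / starRingEnd ℂ α) ^ m = 1 := by
    rw [div_pow, ← map_pow, hαm, map_one, div_one]
  have heq : α = starRingEnd ℂ α := hnd _ _ hαC hconjroot ⟨m, hm, hratio⟩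
  have hre : (α.re : ℂ) = α := Complex.conj_eq_iff_re.mp heq.symm
  have hrm : (α.re : ℝ) ^ m = 1 := by
    have h3 := hαm
    rw [← hre] at h3
    exact_mod_cast h3
  have hcases : α.re = 1 ∨ α.re = -1 := by
    rcases (pow_eq_one_iff_cases).mp hrm with h | h | h
    · omega
    · exact Or.inl h
    · exact Or.inr h.1
  obtain ⟨a, hacases, ha⟩ : ∃ a : K, (a = 1 ∨ a = -1) ∧ embC K a = α := by
    rcases hcases with h | h
    · exact ⟨1, Or.inl rfl, by rw [map_one, ← hre, h]; norm_num⟩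
    · exact ⟨-1, Or.inr rfl, by rw [map_neg, map_one, ← hre, h]; norm_num⟩
  have hroota : QB.IsRoot a := by
    have : embC K (QB.eval a) = 0 := by
      rw [← Polynomial.eval₂_at_apply, ← Polynomial.eval_map, ha]
      exact hα.eq_zero
    exact (_root_.map_eq_zero (embC K)).mp this
  have hpidvd : (X - C a) ∣ PK := (Polynomial.dvd_iff_isRoot.mpr hroota).trans hQBdvd
  have := hPK (X - C a) (monic_X_sub_C a) (irreducible_X_sub_C a) hpidvd
  apply this
  have hca : conj.toAlgHom.toRingHom a = a := by
    rcases hacases with h | h <;> simp [h]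
  simp [Polynomial.map_sub, hca]
  exact hca
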